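/- Let f be an n×n complex matrix whose spectrum is 2iπ-congruence free (no two eigenvalues differ by a nonzero integer multiple of 2πi). Then exp(f) can be written as a polynomial in f, and conversely f is a polynomial in exp(f); in particular any matrix commuting with exp(f) commutes with f. -/

import Mathlib

open Matrix NormedSpace Complex Polynomial

/-- Evaluating an iterated derivative of a multiple of `(X - C a) ^ μ` at `a` gives `0`
provided the number of derivatives is less than `μ`. -/
lemma aux_eval_zero {a : ℂ} {μ j : ℕ} {p : ℂ[X]} (h : (X - C a) ^ μ ∣ p) (hj : j < μ) :
    (Polynomial.derivative^[j] p).eval a = 0 := by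
  obtain ⟨u, hu⟩ := Polynomial.pow_sub_dvd_iterate_derivative_of_pow_dvd j h
  rw [hu, Polynomial.eval_mul, Polynomial.eval_pow, Polynomial.eval_sub, Polynomial.eval_X,
    Polynomial.eval_C, sub_self, zero_pow (Nat.sub_ne_zero_of_lt hj), zero_mul]

/-- Chinese-remainder style interpolation: given pairwise coprime moduli indexed by a finset,
there is a single element congruent to prescribed targets modulo each modulus. -/
lemma aux_crt {R ι : Type*} [CommRing R] (s : Finset ι) (d r : ι → R)
    (h : (↑s : Set ι).Pairwise (Function.onFun IsCoprime d)) :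
    ∃ q : R, ∀ i ∈ s, d i ∣ q - r i := by
  classical
  induction s using Finset.induction_on with
  | empty => exact ⟨0, by simp⟩
  | @insert a s' ha ih =>
    obtain ⟨q', hq'⟩ := ih (h.mono (by
      intro x hx
      simp only [Finset.coe_insert, Set.mem_insert_iff]
      exact Or.inr hx))
    have hcop : IsCoprime (d a) (∏ i ∈ s', d i) := by
      refine IsCoprime.prod_right fun i hi => ?_
      exact h (by simp) (by simp [hi]) (by rintro rfl; exact ha hi)
    obtain ⟨u, v, huv⟩ := hcop
    refine ⟨q' + (r a - q') * (v * ∏ i ∈ s', d i), ?_⟩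
    intro i hi
    rcases Finset.mem_insert.mp hi with rfl | hi'
    · have key : q' + (r i - q') * (v * ∏ j ∈ s', d j) - r i = (q' - r i) * (u * d i) := by
        linear_combination (r i - q') * huv
      rw [key]
      exact dvd_mul_of_dvd_right (dvd_mul_left _ _) _
    · have h1 : d i ∣ q' - r i := hq' i hi'
      have h2 : d i ∣ (r a - q') * (v * ∏ j ∈ s', d j) :=
        dvd_mul_of_dvd_right ((Finset.dvd_prod_of_mem d hi').mul_left v) _
      have key : q' + (r a - q') * (v * ∏ j ∈ s', d j) - r i
          = (q' - r i) + (r a - q') * (v * ∏ j ∈ s', d j) := by ring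
      rw [key]
      exact dvd_add h1 h2

/-- Formal local inversion: if `g' (a) ≠ 0` then for every `μ` there is a polynomial `R`
with `R ∘ g ≡ X mod (X - C a) ^ μ`. -/
lemma aux_loc {K : Type*} [Field K] (g : K[X]) (a : K)
    (hg : (Polynomial.derivative g).eval a ≠ 0) (μ : ℕ) :
    ∃ R : K[X], (X - C a) ^ μ ∣ R.comp g - X := by
  induction μ with
  | zero => exact ⟨0, by simp⟩
  | succ μ ih =>
    obtain ⟨R, hR⟩ := ih
    obtain ⟨h, hh⟩ := hR
    have hdvd : (X - C a) ∣ (g - C (g.eval a)) :=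
      Polynomial.dvd_iff_isRoot.mpr (by simp [Polynomial.IsRoot])
    obtain ⟨g₁, hg₁⟩ := hdvd
    have hder : Polynomial.derivative g
        = g₁ + (X - C a) * Polynomial.derivative g₁ := by
      have h2 := congrArg Polynomial.derivative hg₁
      simpa [Polynomial.derivative_sub, Polynomial.derivative_mul] using h2
    have hg₁a : g₁.eval a = (Polynomial.derivative g).eval a := by
      rw [hder, Polynomial.eval_add, Polynomial.eval_mul, Polynomial.eval_sub,
        Polynomial.eval_X, Polynomial.eval_C, sub_self, zero_mul, add_zero]
    set c : K := - h.eval a / ((Polynomial.derivative g).eval a) ^ μ with hc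
    refine ⟨R + C c * (X - C (g.eval a)) ^ μ, ?_⟩
    have hcomp : (R + C c * (X - C (g.eval a)) ^ μ).comp g - X
        = (X - C a) ^ μ * (h + C c * g₁ ^ μ) := by
      simp only [Polynomial.add_comp, Polynomial.mul_comp, Polynomial.pow_comp,
        Polynomial.sub_comp, Polynomial.C_comp, Polynomial.X_comp]
      rw [hg₁, mul_pow]
      linear_combination hh
    rw [hcomp]
    have hroot : (X - C a) ∣ (h + C c * g₁ ^ μ) := by
      refine Polynomial.dvd_iff_isRoot.mpr ?_
      have : h.eval a + c * (g₁.eval a) ^ μ = 0 := by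
        rw [hg₁a, hc, div_mul_cancel₀ _ (pow_ne_zero _ hg)]
        ring
      simpa [Polynomial.IsRoot] using this
    obtain ⟨w, hw⟩ := hroot
    exact ⟨w, by rw [hw]; ring⟩

theorem stmt_3 {n : ℕ} (f : Matrix (Fin n) (Fin n) ℂ)
    (hfree : ∀ u ∈ spectrum ℂ f, ∀ v ∈ spectrum ℂ f,
      ∀ k : ℤ, k ≠ 0 → u - v ≠ 2 * Real.pi * I * k) :
    (∃ p : ℂ[X], NormedSpace.exp f = aeval f p) ∧
    (∃ q : ℂ[X], f = aeval (NormedSpace.exp f) q) ∧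
    (∀ M : Matrix (Fin n) (Fin n) ℂ, M * NormedSpace.exp f = NormedSpace.exp f * M → M * f = f * M) := by
  classical
  have hint : IsIntegral ℂ f := Algebra.IsIntegral.isIntegral f
  set m : ℂ[X] := minpoly ℂ f with hm
  have hmonic : m.Monic := minpoly.monic hint
  have hm0 : m ≠ 0 := hmonic.ne_zero
  set d : ℕ := m.natDegree with hd
  set t : Finset ℂ := m.roots.toFinset with ht
  set μ : ℂ → ℕ := fun a => m.rootMultiplicity a with hμ
  have hfact : m = ∏ a ∈ t, (X - C a) ^ μ a := by
    conv_lhs => rw [(IsAlgClosed.splits m).eq_prod_roots_of_monic hmonic]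
    rw [Finset.prod_multiset_map_count]
    refine Finset.prod_congr rfl fun a _ => ?_
    rw [Polynomial.count_roots]
  have hμpos : ∀ a ∈ t, 0 < μ a := by
    intro a ha
    have : a ∈ m.roots := Multiset.mem_toFinset.mp ha
    rw [hμ]
    simpa [Polynomial.count_roots] using Multiset.count_pos.mpr this
  have hXsubC : ∀ u v : ℂ, u ≠ v → IsCoprime (X - C u : ℂ[X]) (X - C v) := by
    intro u v huv
    exact Polynomial.pairwise_coprime_X_sub_C (Function.injective_id) huv
  have hcop : (↑t : Set ℂ).Pairwise (Function.onFun IsCoprime fun a => (X - C a) ^ μ a) :=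
    fun a _ b _ hab => (hXsubC a b hab).pow
  have hdvd_m : ∀ c : ℂ[X], (∀ a ∈ t, (X - C a) ^ μ a ∣ c) → m ∣ c := fun c hc =>
    hfact ▸ Finset.prod_dvd_of_coprime hcop hc
  have hpow_dvd_m : ∀ a ∈ t, (X - C a) ^ μ a ∣ m := fun a ha =>
    hfact ▸ Finset.dvd_prod_of_mem _ ha
  -- every root of the minimal polynomial is in the spectrum
  have hspec : ∀ a ∈ t, a ∈ spectrum ℂ f := by
    intro a ha
    have haroot : m.IsRoot a := by
      have : a ∈ m.roots := Multiset.mem_toFinset.mp ha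
      exact (Polynomial.mem_roots'.mp this).2
    rw [spectrum.mem_iff]
    intro hunit
    set s : ℂ[X] := m /ₘ (X - C a) with hs
    have hfs : (X - C a) * s = m := Polynomial.mul_divByMonic_eq_iff_isRoot.mpr haroot
    have hs_monic : s.Monic :=
      (Polynomial.monic_X_sub_C a).of_mul_monic_left (by rw [hfs]; exact hmonic)
    have h0 : (f - (algebraMap ℂ (Matrix (Fin n) (Fin n) ℂ)) a) * (aeval f) s = 0 := by
      have h1 : (aeval f) ((X - C a) * s) = 0 := by
        rw [hfs, hm]; exact minpoly.aeval ℂ f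
      rw [_root_.map_mul, _root_.map_sub, Polynomial.aeval_X, Polynomial.aeval_C] at h1
      exact h1
    have hunit' : IsUnit (f - (algebraMap ℂ (Matrix (Fin n) (Fin n) ℂ)) a) := by
      have := hunit.neg; rwa [neg_sub] at this
    have hs0 : (aeval f) s = 0 :=
      hunit'.mul_left_cancel (h0.trans (mul_zero _).symm)
    have hslt : s.degree < m.degree := by
      rw [← hfs, Polynomial.degree_mul, Polynomial.degree_X_sub_C,
        Polynomial.degree_eq_natDegree hs_monic.ne_zero]
      calc ((s.natDegree : ℕ) : WithBot ℕ) < (s.natDegree : WithBot ℕ) + 1 := by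
            exact_mod_cast Nat.lt_succ_self _
        _ = 1 + (s.natDegree : WithBot ℕ) := by rw [add_comm]
    exact absurd (minpoly.min ℂ f hs_monic hs0) (not_le.mpr hslt)
  -- the exponential is injective on the roots
  have hinj : ∀ a ∈ t, ∀ b ∈ t, a ≠ b → Complex.exp a ≠ Complex.exp b := by
    intro a ha b hb hab heq
    have h1 : Complex.exp (a - b) = 1 := by
      rw [Complex.exp_sub, heq, div_self (Complex.exp_ne_zero b)]
    obtain ⟨k, hk⟩ := Complex.exp_eq_one_iff.mp h1
    have hk0 : k ≠ 0 := by
      rintro rfl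
      simp only [Int.cast_zero, zero_mul] at hk
      exact hab (sub_eq_zero.mp hk)
    exact hfree a (hspec a ha) b (hspec b hb) k hk0 (by rw [hk]; ring)
  -- truncated Taylor expansions of the exponential
  set ν : ℂ → ℕ := fun a => max (μ a) 2 with hν
  set T : ℂ → ℂ[X] := fun a =>
    ∑ j ∈ Finset.range (ν a), C (Complex.exp a / j.factorial) * (X - C a) ^ j with hT
  have hT_deriv : ∀ a : ℂ, ∀ j < ν a,
      (Polynomial.derivative^[j] (T a)).eval a = Complex.exp a := by
    intro a j hj
    have hsum : Polynomial.derivative^[j] (T a)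
        = ∑ i ∈ Finset.range (ν a),
          C (Complex.exp a / i.factorial) * (i.descFactorial j • (X - C a) ^ (i - j)) := by
      rw [hT]
      rw [Polynomial.iterate_derivative_sum]
      refine Finset.sum_congr rfl fun i _ => ?_
      rw [Polynomial.iterate_derivative_C_mul, Polynomial.iterate_derivative_X_sub_pow]
    rw [hsum, Polynomial.eval_finset_sum]
    rw [Finset.sum_eq_single j]
    · rw [Nat.descFactorial_self, Nat.sub_self, pow_zero, nsmul_eq_mul, mul_one,
        Polynomial.eval_mul, Polynomial.eval_C, Polynomial.eval_natCast]
      rw [div_mul_cancel₀]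
      exact_mod_cast Nat.factorial_ne_zero j
    · intro i _ hne
      rcases lt_or_gt_of_ne hne with hlt | hgt
      · rw [Nat.descFactorial_eq_zero_iff_lt.mpr hlt]
        simp
      · have h0 : i - j ≠ 0 := Nat.sub_ne_zero_of_lt hgt
        rw [nsmul_eq_mul]
        simp [zero_pow h0]
    · intro hj'
      exact absurd (Finset.mem_range.mpr hj) hj'
  have hT1 : ∀ a : ℂ, (Polynomial.derivative (T a)).eval a = Complex.exp a := by
    intro a
    have := hT_deriv a 1 (lt_of_lt_of_le one_lt_two (le_max_right _ _))
    simpa using this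
  have hT0 : ∀ a : ℂ, (T a).eval a = Complex.exp a := by
    intro a
    have := hT_deriv a 0 (lt_of_lt_of_le two_pos (le_max_right _ _))
    simpa using this
  -- local inverses of T a
  have hloc : ∀ a : ℂ, ∃ R : ℂ[X], a ∈ t → (X - C a) ^ μ a ∣ R.comp (T a) - X := by
    intro a
    obtain ⟨R, hR⟩ := aux_loc (T a) a (by rw [hT1 a]; exact Complex.exp_ne_zero a) (μ a)
    exact ⟨R, fun _ => hR⟩
  choose Rf hRf using hloc
  -- the interpolation polynomial P
  obtain ⟨P, hP⟩ := aux_crt t (fun a => (X - C a) ^ μ a) T hcop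
  -- the inverse-interpolation polynomial q
  have hcop2 : (↑t : Set ℂ).Pairwise
      (Function.onFun IsCoprime fun a => (X - C (Complex.exp a)) ^ μ a) :=
    fun a ha b hb hab => (hXsubC _ _ (hinj a ha b hb hab)).pow
  obtain ⟨q, hq⟩ := aux_crt t (fun a => (X - C (Complex.exp a)) ^ μ a) Rf hcop2
  -- the key divisibility
  have hkey : m ∣ q.comp P - X := by
    apply hdvd_m
    intro a ha
    have hPT : (X - C a) ^ μ a ∣ P - T a := hP a ha
    have hdvd1 : (X - C a) ∣ P - C (Complex.exp a) := by
      have e1 : (X - C a) ∣ P - T a :=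
        dvd_trans (dvd_pow_self _ (hμpos a ha).ne') hPT
      have e2 : (X - C a) ∣ T a - C (Complex.exp a) := by
        refine Polynomial.dvd_iff_isRoot.mpr ?_
        simp [Polynomial.IsRoot, hT0 a]
      have := dvd_add e1 e2
      rwa [sub_add_sub_cancel] at this
    have h1 : (X - C a) ^ μ a ∣ q.comp P - (Rf a).comp P := by
      have hmap := map_dvd (Polynomial.aeval P) (hq a ha)
      rw [_root_.map_sub, _root_.map_pow, _root_.map_sub, Polynomial.aeval_X, Polynomial.aeval_C] at hmap
      have hPw : (X - C a) ^ μ a ∣ (P - (algebraMap ℂ ℂ[X]) (Complex.exp a)) ^ μ a := by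
        have : (algebraMap ℂ ℂ[X]) (Complex.exp a) = C (Complex.exp a) := rfl
        rw [this]
        exact pow_dvd_pow_of_dvd hdvd1 _
      have := dvd_trans hPw hmap
      rwa [← Polynomial.comp_eq_aeval, ← Polynomial.comp_eq_aeval] at this
    have h2 : (X - C a) ^ μ a ∣ (Rf a).comp P - (Rf a).comp (T a) := by
      have hsub : P - T a ∣ (Rf a).comp P - (Rf a).comp (T a) := by
        have hcompP : (Rf a).comp P = ((Rf a).map C).eval P := by
          rw [Polynomial.comp, Polynomial.eval₂_eq_eval_map]
        have hcompT : (Rf a).comp (T a) = ((Rf a).map C).eval (T a) := by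
          rw [Polynomial.comp, Polynomial.eval₂_eq_eval_map]
        rw [hcompP, hcompT]
        exact Polynomial.sub_dvd_eval_sub P (T a) ((Rf a).map C)
      exact dvd_trans hPT hsub
    have h3 : (X - C a) ^ μ a ∣ (Rf a).comp (T a) - X := hRf a ha
    have key : q.comp P - X = (q.comp P - (Rf a).comp P)
        + ((Rf a).comp P - (Rf a).comp (T a)) + ((Rf a).comp (T a) - X) := by ring
    rw [key]
    exact dvd_add (dvd_add h1 h2) h3
  -- partial sums of the exponential series as polynomials
  set S : ℕ → ℂ[X] := fun N =>
    ∑ k ∈ Finset.range N, C ((k.factorial : ℂ))⁻¹ * X ^ k with hS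
  have hSd : ∀ N, Polynomial.derivative (S N) = S (N - 1) := by
    intro N
    cases N with
    | zero => simp [hS]
    | succ N =>
      rw [hS]
      simp only [Nat.succ_sub_one]
      rw [Finset.sum_range_succ']
      rw [_root_.map_add]
      have hzero : Polynomial.derivative (C (((0 : ℕ).factorial : ℂ))⁻¹ * X ^ 0) = 0 := by
        simp
      rw [hzero, add_zero, _root_.map_sum]
      refine Finset.sum_congr rfl fun k _ => ?_
      have hk1 : ((k : ℂ) + 1) ≠ 0 := by exact_mod_cast Nat.succ_ne_zero k
      have hcoef : (((k+1).factorial : ℂ))⁻¹ * ((k : ℂ) + 1) = ((k.factorial : ℂ))⁻¹ := by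
        rw [Nat.factorial_succ]
        push_cast
        rw [mul_inv, mul_comm ((k : ℂ) + 1)⁻¹ _, mul_assoc, inv_mul_cancel₀ hk1, mul_one]
      calc Polynomial.derivative (C (((k+1).factorial : ℂ))⁻¹ * X ^ (k+1))
          = C (((k+1).factorial : ℂ))⁻¹ * (C ((k : ℂ) + 1) * X ^ k) := by
            rw [Polynomial.derivative_C_mul, Polynomial.derivative_X_pow]
            push_cast
            simp
        _ = C ((((k+1).factorial : ℂ))⁻¹ * ((k : ℂ) + 1)) * X ^ k := by
            rw [← mul_assoc, ← Polynomial.C_mul]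
        _ = C ((k.factorial : ℂ))⁻¹ * X ^ k := by rw [hcoef]
  have hSiter : ∀ j N, Polynomial.derivative^[j] (S N) = S (N - j) := by
    intro j
    induction j with
    | zero => intro N; simp
    | succ j ih =>
      intro N
      rw [Function.iterate_succ_apply, hSd, ih]
      congr 1
      omega
  have hSeval : ∀ z : ℂ, Filter.Tendsto (fun N => (S N).eval z)
      Filter.atTop (nhds (Complex.exp z)) := by
    intro z
    have h1 := (NormedSpace.exp_series_hasSum_exp' (𝕂 := ℂ) z).tendsto_sum_nat
    rw [← Complex.exp_eq_exp_ℂ] at h1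
    have heq : ∀ N, ∑ k ∈ Finset.range N, ((k.factorial : ℂ))⁻¹ • z ^ k
        = (S N).eval z := by
      intro N
      rw [hS, Polynomial.eval_finset_sum]
      refine Finset.sum_congr rfl fun k _ => ?_
      rw [Polynomial.eval_mul, Polynomial.eval_C, Polynomial.eval_pow, Polynomial.eval_X,
        smul_eq_mul]
    simp only [heq] at h1
    exact h1
  -- the exponential of the matrix as a limit of polynomial evaluations
  have hexp_lim : Filter.Tendsto (fun N => (aeval f) (S N))
      Filter.atTop (nhds (NormedSpace.exp f)) := by
    letI : SeminormedRing (Matrix (Fin n) (Fin n) ℂ) := Matrix.linftyOpSemiNormedRing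
    letI : NormedRing (Matrix (Fin n) (Fin n) ℂ) := Matrix.linftyOpNormedRing
    letI : NormedAlgebra ℂ (Matrix (Fin n) (Fin n) ℂ) := Matrix.linftyOpNormedAlgebra
    have h1 := (NormedSpace.exp_series_hasSum_exp' (𝕂 := ℂ) f).tendsto_sum_nat
    have heq : ∀ N, ∑ k ∈ Finset.range N, ((k.factorial : ℂ))⁻¹ • f ^ k
        = (aeval f) (S N) := by
      intro N
      rw [hS, _root_.map_sum]
      refine Finset.sum_congr rfl fun k _ => ?_
      rw [_root_.map_mul, Polynomial.aeval_C, _root_.map_pow, Polynomial.aeval_X, Algebra.smul_def]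
    simp only [heq] at h1
    exact h1
  -- the coefficient space and evaluation maps
  set V : (Fin d → ℂ) →ₗ[ℂ] ℂ[X] :=
    ∑ i : Fin d, LinearMap.smulRight (LinearMap.proj i) (X ^ (i : ℕ)) with hV
  have hVapp : ∀ c, V c = ∑ i : Fin d, C (c i) * X ^ (i : ℕ) := by
    intro c
    rw [hV]
    rw [LinearMap.sum_apply]
    refine Finset.sum_congr rfl fun i _ => ?_
    rw [LinearMap.smulRight_apply, LinearMap.proj_apply, Polynomial.smul_eq_C_mul]
  have hVmem : ∀ c, (V c).degree < (d : WithBot ℕ) := by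
    intro c
    rw [hVapp]
    have hmem : (∑ i : Fin d, C (c i) * X ^ (i : ℕ)) ∈ Polynomial.degreeLT ℂ d := by
      refine Submodule.sum_mem _ fun i _ => ?_
      rw [Polynomial.mem_degreeLT]
      exact lt_of_le_of_lt (Polynomial.degree_C_mul_X_pow_le _ _)
        (WithBot.coe_lt_coe.mpr i.2)
    exact Polynomial.mem_degreeLT.mp hmem
  have hlift : ∀ r : ℂ[X], r.degree < (d : WithBot ℕ) → V (fun i => r.coeff i) = r := by
    intro r hr
    by_cases h0 : r = 0
    · subst h0; rw [hVapp]; simp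
    · have hnd : r.natDegree < d := (Polynomial.natDegree_lt_iff_degree_lt h0).mpr hr
      conv_rhs => rw [Polynomial.as_sum_range' r d hnd]
      rw [hVapp, Fin.sum_univ_eq_sum_range (fun i => C (r.coeff i) * X ^ i)]
      exact Finset.sum_congr rfl fun i _ => by rw [Polynomial.C_mul_X_pow_eq_monomial]
  have hVcoeff : ∀ c (i : Fin d), (V c).coeff (i : ℕ) = c i := by
    intro c i
    rw [hVapp, Polynomial.finset_sum_coeff]
    rw [Finset.sum_eq_single i]
    · rw [Polynomial.coeff_C_mul, Polynomial.coeff_X_pow, if_pos rfl, mul_one]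
    · intro j _ hne
      rw [Polynomial.coeff_C_mul, Polynomial.coeff_X_pow,
        if_neg (by simpa [Fin.val_eq_val] using (hne.symm : i ≠ j)), mul_zero]
    · intro h; exact absurd (Finset.mem_univ i) h
  -- the Hermite evaluation map
  set Φ : (Fin d → ℂ) →ₗ[ℂ] ((Σ a : {x : ℂ // x ∈ t}, Fin (μ a.1)) → ℂ) :=
    LinearMap.pi (fun i => (Polynomial.leval (i.1 : ℂ)).comp
      ((((Polynomial.derivative : ℂ[X] →ₗ[ℂ] ℂ[X]) ^ (i.2 : ℕ))).comp V)) with hΦ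
  have hΦapp : ∀ c (i : Σ a : {x : ℂ // x ∈ t}, Fin (μ a.1)),
      Φ c i = (Polynomial.derivative^[(i.2 : ℕ)] (V c)).eval (i.1 : ℂ) := by
    intro c i
    rw [hΦ, LinearMap.pi_apply, LinearMap.comp_apply, LinearMap.comp_apply,
      Module.End.pow_apply, Polynomial.leval_apply]
  have hker : LinearMap.ker Φ = ⊥ := by
    rw [LinearMap.ker_eq_bot']
    intro c hc
    have hzero : ∀ a ∈ t, ∀ j < μ a, (Polynomial.derivative^[j] (V c)).eval a = 0 := by
      intro a ha j hj
      have := congrFun hc ⟨⟨a, ha⟩, ⟨j, hj⟩⟩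
      rw [hΦapp] at this
      simpa using this
    have hr0 : V c = 0 := by
      by_contra hr
      have hdvd : ∀ a ∈ t, (X - C a) ^ μ a ∣ V c := by
        intro a ha
        have hlt : μ a - 1 < Polynomial.rootMultiplicity a (V c) :=
          Polynomial.lt_rootMultiplicity_of_isRoot_iterate_derivative hr
            (fun mm hmm => hzero a ha mm (by have := hμpos a ha; omega))
        exact dvd_trans (pow_dvd_pow _ (by omega))
          (Polynomial.pow_rootMultiplicity_dvd (V c) a)
      have hmdvd := hdvd_m _ hdvd
      have hle := Polynomial.natDegree_le_of_dvd hmdvd hr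
      have hlt2 : (V c).natDegree < d := (Polynomial.natDegree_lt_iff_degree_lt hr).mpr
        (hVmem c)
      rw [← hd] at hle
      omega
    funext i
    have := hVcoeff c i
    rw [hr0] at this
    simpa using this.symm
  obtain ⟨G, hG⟩ := LinearMap.exists_leftInverse_of_injective Φ hker
  have hGΦ : ∀ c, G (Φ c) = c := by
    intro c
    have := LinearMap.ext_iff.mp hG c
    simpa using this
  set A : (Fin d → ℂ) →ₗ[ℂ] Matrix (Fin n) (Fin n) ℂ :=
    (Polynomial.aeval f).toLinearMap.comp V with hA
  have hmoddeg : ∀ p : ℂ[X], (p %ₘ m).degree < (d : WithBot ℕ) := by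
    intro p
    have := Polynomial.degree_modByMonic_lt p hmonic
    rwa [Polynomial.degree_eq_natDegree hm0] at this
  have hmod : ∀ p : ℂ[X], (aeval f) (p %ₘ m) = (aeval f) p := by
    intro p
    conv_rhs => rw [← Polynomial.modByMonic_add_div p m]
    rw [_root_.map_add, _root_.map_mul]
    have : (aeval f) m = 0 := by rw [hm]; exact minpoly.aeval ℂ f
    rw [this, zero_mul, add_zero]
  have hΦmod : ∀ (p : ℂ[X]) (i : Σ a : {x : ℂ // x ∈ t}, Fin (μ a.1)),
      Φ (fun k => (p %ₘ m).coeff (k : ℕ)) i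
        = (Polynomial.derivative^[(i.2 : ℕ)] p).eval (i.1 : ℂ) := by
    intro p i
    obtain ⟨⟨a, ha⟩, j⟩ := i
    rw [hΦapp, hlift _ (hmoddeg p)]
    have hsub : (X - C a) ^ μ a ∣ p - p %ₘ m := by
      have heq : p - p %ₘ m = m * (p /ₘ m) :=
        sub_eq_iff_eq_add'.mpr (Polynomial.modByMonic_add_div p m).symm
      rw [heq]
      exact dvd_mul_of_dvd_left (hpow_dvd_m a ha) _
    have hz := aux_eval_zero hsub j.isLt
    rw [Polynomial.iterate_derivative_sub, Polynomial.eval_sub] at hz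
    have := sub_eq_zero.mp hz
    exact this.symm
  have hPmod : ∀ i : Σ a : {x : ℂ // x ∈ t}, Fin (μ a.1),
      Φ (fun k => (P %ₘ m).coeff (k : ℕ)) i = Complex.exp (i.1 : ℂ) := by
    intro i
    obtain ⟨⟨a, ha⟩, j⟩ := i
    rw [hΦmod P ⟨⟨a, ha⟩, j⟩]
    have hPT : (X - C a) ^ μ a ∣ P - T a := hP a ha
    have hz := aux_eval_zero hPT j.isLt
    rw [Polynomial.iterate_derivative_sub, Polynomial.eval_sub] at hz
    have heq := sub_eq_zero.mp hz
    simp only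
    rw [heq, hT_deriv a (j : ℕ) (lt_of_lt_of_le j.isLt (le_max_left _ _))]
  have hSmod : ∀ N (i : Σ a : {x : ℂ // x ∈ t}, Fin (μ a.1)),
      Φ (fun k => (S N %ₘ m).coeff (k : ℕ)) i
        = (S (N - (i.2 : ℕ))).eval (i.1 : ℂ) := by
    intro N i
    rw [hΦmod (S N) i, hSiter]
  have htend : Filter.Tendsto (fun N => (fun k : Fin d => (S N %ₘ m).coeff (k : ℕ)))
      Filter.atTop (nhds (fun k : Fin d => (P %ₘ m).coeff (k : ℕ))) := by
    have hΦt : Filter.Tendsto (fun N => Φ (fun k : Fin d => (S N %ₘ m).coeff (k : ℕ)))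
        Filter.atTop (nhds (Φ (fun k : Fin d => (P %ₘ m).coeff (k : ℕ)))) := by
      rw [tendsto_pi_nhds]
      intro i
      simp only [hSmod, hPmod]
      exact (hSeval (i.1 : ℂ)).comp (Filter.tendsto_sub_atTop_nat (i.2 : ℕ))
    have hGc : Continuous G := G.continuous_of_finiteDimensional
    have hcomp := (hGc.tendsto _).comp hΦt
    simp only [Function.comp_def, hGΦ] at hcomp
    exact hcomp
  have hAc : Continuous A := A.continuous_of_finiteDimensional
  have hAlim := (hAc.tendsto _).comp htend
  have hAS : ∀ p : ℂ[X], A (fun k : Fin d => (p %ₘ m).coeff (k : ℕ)) = (aeval f) p := by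
    intro p
    rw [hA, LinearMap.comp_apply, AlgHom.toLinearMap_apply, hlift _ (hmoddeg p)]
    exact hmod p
  have hexpP : NormedSpace.exp f = (aeval f) P := by
    refine tendsto_nhds_unique hexp_lim ?_
    rw [← hAS P]
    have : (fun N => (aeval f) (S N))
        = (fun N => A (fun k : Fin d => (S N %ₘ m).coeff (k : ℕ))) := by
      funext N
      rw [hAS (S N)]
    rw [this]
    exact hAlim
  -- part 2
  have hq2 : f = (aeval (NormedSpace.exp f)) q := by
    rw [hexpP, ← Polynomial.aeval_comp]
    obtain ⟨w, hw⟩ := hkey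
    have hqP : q.comp P = X + m * w := by rw [← hw]; ring
    rw [hqP, _root_.map_add, _root_.map_mul]
    have : (aeval f) m = 0 := by rw [hm]; exact minpoly.aeval ℂ f
    rw [this, zero_mul, add_zero, Polynomial.aeval_X]
  refine ⟨⟨P, hexpP⟩, ⟨q, hq2⟩, ?_⟩
  intro M hM
  have hcomm : Commute M (NormedSpace.exp f) := hM
  have hc : ∀ r : ℂ[X], Commute M ((aeval (NormedSpace.exp f)) r) := by
    intro r
    induction r using Polynomial.induction_on with
    | C a =>
      rw [Polynomial.aeval_C]
      exact (Algebra.commutes a M).symm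
    | add p₁ p₂ hp₁ hp₂ =>
      rw [_root_.map_add]
      exact hp₁.add_right hp₂
    | monomial k a _ =>
      rw [_root_.map_mul, Polynomial.aeval_C, _root_.map_pow, Polynomial.aeval_X]
      exact Commute.mul_right ((Algebra.commutes a M).symm) (hcomm.pow_right _)
  rw [hq2]
  exact (hc q).eq
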